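/- Fix δ ≥ 0, Δ > 0, and a > 0. Then: (1) the set S(a) is a closed (hence complete) subset of ℝ^𝒩; and (2) F_γ converges uniformly to F_∞ on Ŝ(a) as γ → ∞. -/

import Mathlib

open Finset Filter

namespace SBCM

variable {V : Type*} [Fintype V] [DecidableEq V]

/-- Sigmoidal influence weight. -/
noncomputable def wt (G : SimpleGraph V) [DecidableRel G.Adj] (γ δ : ℝ) (x : V → ℝ)
    (i j : V) : ℝ :=
  if G.Adj i j then 1 / (1 + Real.exp (γ * (x i - x j) ^ 2 - γ * δ)) else 0

/-- SBCM update operator. -/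
noncomputable def F (G : SimpleGraph V) [DecidableRel G.Adj] (Z : Finset V) (γ δ : ℝ)
    (x : V → ℝ) (i : V) : ℝ :=
  if i ∈ Z then 0
  else (∑ j, wt G γ δ x i j * (x j - x i)) / (∑ j, wt G γ δ x i j)

/-- Jacobian block over the persuadable nodes. -/
noncomputable def Jp (G : SimpleGraph V) [DecidableRel G.Adj] (Z : Finset V) (γ δ : ℝ)
    (x : V → ℝ) : Matrix {v : V // v ∉ Z} {v : V // v ∉ Z} ℝ :=
  fun i j => fderiv ℝ (fun y : V → ℝ => F G Z γ δ y i.val) x (Pi.single (j : V) (1 : ℝ))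

/-- `μ` is a (real) eigenvalue of the matrix `M`. -/
def HasEig {n : Type*} [Fintype n] (M : Matrix n n ℝ) (μ : ℝ) : Prop :=
  ∃ φ : n → ℝ, φ ≠ 0 ∧ M.mulVec φ = μ • φ

/-- All eigenvalues of `M` are strictly negative. -/
def LinStable {n : Type*} [Fintype n] (M : Matrix n n ℝ) : Prop :=
  ∀ μ : ℝ, HasEig M μ → μ < 0

/-- `M` has a strictly positive eigenvalue. -/
def LinUnstable {n : Type*} [Fintype n] (M : Matrix n n ℝ) : Prop :=
  ∃ μ : ℝ, 0 < μ ∧ HasEig M μ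

end SBCM

namespace SBCM

variable {V : Type*} [Fintype V] [DecidableEq V]

/-- Limiting (modified Hegselmann–Krause) influence weight. -/
noncomputable def wtinf (G : SimpleGraph V) [DecidableRel G.Adj] (δ : ℝ) (x : V → ℝ)
    (i j : V) : ℝ :=
  if G.Adj i j then
    if (x i - x j) ^ 2 < δ then 1
    else if (x i - x j) ^ 2 = δ then 1 / 2
    else 0
  else 0

/-- Limiting (modified Hegselmann–Krause) update operator. -/
noncomputable def Finf (G : SimpleGraph V) [DecidableRel G.Adj] (Z : Finset V) (δ : ℝ)
    (x : V → ℝ) (i : V) : ℝ :=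
  if i ∈ Z then 0
  else (∑ j, wtinf G δ x i j * (x j - x i)) / (∑ j, wtinf G δ x i j)

/-- The set `S(a)`: opinion vectors bounded by `Δ/2` in sup norm whose adjacent opinion
distances are bounded away from the confidence threshold `√δ` by `a`. -/
def Sset (G : SimpleGraph V) (δ Δ a : ℝ) : Set (V → ℝ) :=
  {x | (∀ i j : V, G.Adj i j → a ≤ |(|x i - x j| - Real.sqrt δ)|) ∧ ∀ i, |x i| ≤ Δ / 2}

/-- The set `Ŝ(a)`: members of `S(a)` in which every persuadable node has at least one
neighbor strictly within the confidence bound. -/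
def Shat (G : SimpleGraph V) [DecidableRel G.Adj] (Z : Finset V) (δ Δ a : ℝ) :
    Set (V → ℝ) :=
  {x ∈ Sset G δ Δ a | ∀ i : V, i ∉ Z → ∃ j, G.Adj i j ∧ |x i - x j| ≤ Real.sqrt δ - a}

end SBCM

namespace SBCM

variable {V : Type*} [Fintype V] [DecidableEq V]

lemma wt_nonneg (G : SimpleGraph V) [DecidableRel G.Adj] (γ δ : ℝ) (x : V → ℝ) (i j : V) :
    0 ≤ wt G γ δ x i j := by
  unfold wt; split_ifs with h
  · positivity
  · exact le_rfl

lemma wtinf_nonneg (G : SimpleGraph V) [DecidableRel G.Adj] (δ : ℝ) (x : V → ℝ) (i j : V) :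
    0 ≤ wtinf G δ x i j := by
  unfold wtinf; split_ifs <;> norm_num

lemma wtinf_le_one (G : SimpleGraph V) [DecidableRel G.Adj] (δ : ℝ) (x : V → ℝ) (i j : V) :
    wtinf G δ x i j ≤ 1 := by
  unfold wtinf; split_ifs <;> norm_num

lemma gap {G : SimpleGraph V} {δ Δ a : ℝ} (hδ : 0 ≤ δ) (ha : 0 < a)
    {x : V → ℝ} (hx : x ∈ Sset G δ Δ a) {i j : V} (hij : G.Adj i j) :
    (x i - x j) ^ 2 + a ^ 2 ≤ δ ∨ δ + a ^ 2 ≤ (x i - x j) ^ 2 := by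
  have h := hx.1 i j hij
  have hs : Real.sqrt δ ^ 2 = δ := Real.sq_sqrt hδ
  have hs0 : 0 ≤ Real.sqrt δ := Real.sqrt_nonneg δ
  have hd0 : 0 ≤ |x i - x j| := abs_nonneg _
  have hd2 : |x i - x j| ^ 2 = (x i - x j) ^ 2 := sq_abs _
  rcases le_abs.mp h with h1 | h1
  · right; nlinarith
  · left
    have hsa : a ≤ Real.sqrt δ := by linarith
    nlinarith

lemma wt_sub_le {G : SimpleGraph V} [DecidableRel G.Adj] {γ δ Δ a : ℝ}
    (hδ : 0 ≤ δ) (ha : 0 < a) (hγ : 0 ≤ γ)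
    {x : V → ℝ} (hx : x ∈ Sset G δ Δ a) (i j : V) :
    |wt G γ δ x i j - wtinf G δ x i j| ≤ Real.exp (-(γ * a ^ 2)) := by
  by_cases hij : G.Adj i j
  · have hgap := gap hδ ha hx hij
    have hE := Real.exp_pos (γ * (x i - x j) ^ 2 - γ * δ)
    rcases hgap with h1 | h1
    · have hlt : (x i - x j) ^ 2 < δ := by nlinarith
      rw [wt, wtinf, if_pos hij, if_pos hij, if_pos hlt]
      have heq : 1 / (1 + Real.exp (γ * (x i - x j) ^ 2 - γ * δ)) - 1
          = -(Real.exp (γ * (x i - x j) ^ 2 - γ * δ)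
              / (1 + Real.exp (γ * (x i - x j) ^ 2 - γ * δ))) := by
        field_simp
        ring
      rw [heq, abs_neg, abs_of_nonneg (by positivity)]
      refine le_trans (div_le_self hE.le (by linarith)) ?_
      apply Real.exp_le_exp.mpr
      nlinarith [mul_le_mul_of_nonneg_left h1 hγ]
    · have h2 : ¬ (x i - x j) ^ 2 < δ := by nlinarith
      have h3 : ¬ (x i - x j) ^ 2 = δ := by nlinarith
      rw [wt, wtinf, if_pos hij, if_pos hij, if_neg h2, if_neg h3, sub_zero,
        abs_of_nonneg (by positivity)]
      calc 1 / (1 + Real.exp (γ * (x i - x j) ^ 2 - γ * δ))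
          ≤ 1 / Real.exp (γ * (x i - x j) ^ 2 - γ * δ) := by
            apply one_div_le_one_div_of_le hE; linarith
        _ = Real.exp (-(γ * (x i - x j) ^ 2 - γ * δ)) := by
            rw [Real.exp_neg, one_div]
        _ ≤ _ := by
            apply Real.exp_le_exp.mpr
            nlinarith [mul_le_mul_of_nonneg_left h1 hγ]
  · rw [wt, wtinf, if_neg hij, if_neg hij, sub_zero, abs_zero]
    positivity

end SBCM

set_option maxHeartbeats 800000 in
/-- The set `S(a)` is closed (hence complete), and `F_γ` converges
uniformly to `F_∞` on `Ŝ(a)` as `γ → ∞`. -/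
theorem stmt_5 {V : Type*} [Fintype V] [DecidableEq V]
    (G : SimpleGraph V) [DecidableRel G.Adj] (Z : Finset V)
    (hnbr : ∀ i : V, i ∉ Z → ∃ j, G.Adj i j)
    (δ Δ a : ℝ) (hδ : 0 ≤ δ) (hΔ : 0 < Δ) (ha : 0 < a) :
    IsClosed (SBCM.Sset G δ Δ a) ∧
    TendstoUniformlyOn (fun (γ : ℝ) (x : V → ℝ) => SBCM.F G Z γ δ x)
      (SBCM.Finf G Z δ) Filter.atTop (SBCM.Shat G Z δ Δ a) := by
  constructor
  · -- closedness of S(a)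
    have hrep : SBCM.Sset G δ Δ a =
        (⋂ i, ⋂ j, {x : V → ℝ | G.Adj i j → a ≤ |(|x i - x j| - Real.sqrt δ)|}) ∩
        (⋂ i, {x : V → ℝ | |x i| ≤ Δ / 2}) := by
      ext x
      simp only [SBCM.Sset, Set.mem_setOf_eq, Set.mem_inter_iff, Set.mem_iInter]
    rw [hrep]
    apply IsClosed.inter
    · apply isClosed_iInter; intro i; apply isClosed_iInter; intro j
      by_cases hij : G.Adj i j
      · have : {x : V → ℝ | G.Adj i j → a ≤ |(|x i - x j| - Real.sqrt δ)|}
            = {x : V → ℝ | a ≤ |(|x i - x j| - Real.sqrt δ)|} := by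
          ext x; simp [hij]
        rw [this]
        exact isClosed_le continuous_const
          ((((continuous_apply i).sub (continuous_apply j)).abs.sub continuous_const).abs)
      · have : {x : V → ℝ | G.Adj i j → a ≤ |(|x i - x j| - Real.sqrt δ)|} = Set.univ := by
          ext x; simp [hij]
        rw [this]; exact isClosed_univ
    · apply isClosed_iInter; intro i
      exact isClosed_le (continuous_apply i).abs continuous_const
  · -- uniform convergence
    rw [Metric.tendstoUniformlyOn_iff]
    intro ε hε
    set n : ℝ := (Fintype.card V : ℝ) with hn_def
    have hn : 0 ≤ n := Nat.cast_nonneg _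
    set C : ℝ := 4 * n ^ 2 * Δ + 1 with hC_def
    have hC0 : 0 < C := by positivity
    have htend : Tendsto (fun γ : ℝ => C * Real.exp (-(γ * a ^ 2))) atTop (nhds 0) := by
      have h1 : Tendsto (fun γ : ℝ => γ * a ^ 2) atTop atTop :=
        Tendsto.atTop_mul_const (by positivity) tendsto_id
      have h2 : Tendsto (fun γ : ℝ => Real.exp (-(γ * a ^ 2))) atTop (nhds 0) :=
        Real.tendsto_exp_atBot.comp (tendsto_neg_atTop_atBot.comp h1)
      simpa using h2.const_mul C
    have hev1 : ∀ᶠ γ : ℝ in atTop, C * Real.exp (-(γ * a ^ 2)) < ε :=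
      htend.eventually_lt_const hε
    filter_upwards [hev1, eventually_ge_atTop (0 : ℝ)] with γ hγε hγ0
    intro x hx
    rw [dist_pi_lt_iff hε]
    intro i
    by_cases hiZ : i ∈ Z
    · simp [SBCM.F, SBCM.Finf, hiZ, hε]
    · obtain ⟨hxS, hxhat⟩ := hx
      obtain ⟨j₀, hj₀adj, hj₀⟩ := hxhat i hiZ
      set η : ℝ := Real.exp (-(γ * a ^ 2)) with hη_def
      have hη0 : 0 < η := Real.exp_pos _
      have hs : Real.sqrt δ ^ 2 = δ := Real.sq_sqrt hδ
      have hs0 : 0 ≤ Real.sqrt δ := Real.sqrt_nonneg δ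
      have hj₀0 : 0 ≤ Real.sqrt δ - a := le_trans (abs_nonneg _) hj₀
      have hsq : (x i - x j₀) ^ 2 < δ := by
        nlinarith [sq_abs (x i - x j₀), abs_nonneg (x i - x j₀)]
      set D : ℝ := ∑ j, SBCM.wt G γ δ x i j with hD_def
      set D' : ℝ := ∑ j, SBCM.wtinf G δ x i j with hD'_def
      set N : ℝ := ∑ j, SBCM.wt G γ δ x i j * (x j - x i) with hN_def
      set N' : ℝ := ∑ j, SBCM.wtinf G δ x i j * (x j - x i) with hN'_def
      have hwtinf₀ : SBCM.wtinf G δ x i j₀ = 1 := by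
        rw [SBCM.wtinf, if_pos hj₀adj, if_pos hsq]
      have hwt₀ : 1 / 2 ≤ SBCM.wt G γ δ x i j₀ := by
        rw [SBCM.wt, if_pos hj₀adj]
        have hEle : Real.exp (γ * (x i - x j₀) ^ 2 - γ * δ) ≤ 1 := by
          apply Real.exp_le_one_iff.mpr
          nlinarith
        have hEpos := Real.exp_pos (γ * (x i - x j₀) ^ 2 - γ * δ)
        rw [div_le_div_iff₀ (by norm_num) (by positivity)]
        linarith
      have hD : 1 / 2 ≤ D :=
        le_trans hwt₀ (Finset.single_le_sum
          (fun k _ => SBCM.wt_nonneg G γ δ x i k) (Finset.mem_univ j₀))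
      have hD' : 1 ≤ D' := by
        rw [← hwtinf₀]
        exact Finset.single_le_sum
          (fun k _ => SBCM.wtinf_nonneg G δ x i k) (Finset.mem_univ j₀)
      have hD0 : 0 < D := by linarith
      have hD'0 : 0 < D' := by linarith
      have hD'n : D' ≤ n := by
        calc D' ≤ ∑ _j : V, (1 : ℝ) :=
              Finset.sum_le_sum (fun k _ => SBCM.wtinf_le_one G δ x i k)
          _ = n := by simp [hn_def]
      have hDD' : |D - D'| ≤ n * η := by
        rw [hD_def, hD'_def, ← Finset.sum_sub_distrib]
        calc |∑ j, (SBCM.wt G γ δ x i j - SBCM.wtinf G δ x i j)|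
            ≤ ∑ j, |SBCM.wt G γ δ x i j - SBCM.wtinf G δ x i j| :=
              Finset.abs_sum_le_sum_abs _ _
          _ ≤ ∑ _j : V, η :=
              Finset.sum_le_sum (fun k _ => SBCM.wt_sub_le hδ ha hγ0 hxS i k)
          _ = n * η := by simp [hn_def]; try ring
      have hxx : ∀ k, |x k - x i| ≤ Δ := by
        intro k
        have h1 := hxS.2 k
        have h2 := hxS.2 i
        calc |x k - x i| ≤ |x k| + |x i| := abs_sub _ _
          _ ≤ Δ := by linarith
      have hNN' : |N - N'| ≤ n * Δ * η := by
        rw [hN_def, hN'_def, ← Finset.sum_sub_distrib]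
        have hterm : ∀ k : V, |SBCM.wt G γ δ x i k * (x k - x i)
            - SBCM.wtinf G δ x i k * (x k - x i)| ≤ η * Δ := by
          intro k
          rw [← sub_mul, abs_mul]
          exact mul_le_mul (SBCM.wt_sub_le hδ ha hγ0 hxS i k) (hxx k)
            (abs_nonneg _) hη0.le
        calc |∑ j, (SBCM.wt G γ δ x i j * (x j - x i)
                - SBCM.wtinf G δ x i j * (x j - x i))|
            ≤ ∑ j, |SBCM.wt G γ δ x i j * (x j - x i)
                - SBCM.wtinf G δ x i j * (x j - x i)| := Finset.abs_sum_le_sum_abs _ _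
          _ ≤ ∑ _j : V, η * Δ := Finset.sum_le_sum (fun k _ => hterm k)
          _ = n * Δ * η := by simp [hn_def]; try ring
      have hN' : |N'| ≤ n * Δ := by
        rw [hN'_def]
        calc |∑ j, SBCM.wtinf G δ x i j * (x j - x i)|
            ≤ ∑ j, |SBCM.wtinf G δ x i j * (x j - x i)| := Finset.abs_sum_le_sum_abs _ _
          _ ≤ ∑ _j : V, (1 : ℝ) * Δ := by
              apply Finset.sum_le_sum
              intro k _
              rw [abs_mul]
              apply mul_le_mul ?_ (hxx k) (abs_nonneg _) (by norm_num)
              rw [abs_of_nonneg (SBCM.wtinf_nonneg G δ x i k)]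
              exact SBCM.wtinf_le_one G δ x i k
          _ = n * Δ := by simp [hn_def]
      have hX : |N' * D - N * D'| ≤ 2 * n ^ 2 * Δ * η := by
        have h1 : N' * D - N * D' = (N' - N) * D' + N' * (D - D') := by ring
        rw [h1]
        calc |(N' - N) * D' + N' * (D - D')|
            ≤ |(N' - N) * D'| + |N' * (D - D')| := abs_add_le _ _
          _ = |N' - N| * |D'| + |N'| * |D - D'| := by rw [abs_mul, abs_mul]
          _ ≤ (n * Δ * η) * n + (n * Δ) * (n * η) := by
              apply add_le_add
              · apply mul_le_mul ?_ ?_ (abs_nonneg _) (by positivity)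
                · rw [abs_sub_comm]; exact hNN'
                · rw [abs_of_pos hD'0]; exact hD'n
              · exact mul_le_mul hN' hDD' (abs_nonneg _) (by positivity)
          _ = 2 * n ^ 2 * Δ * η := by ring
      have key : |N' / D' - N / D| ≤ 2 * |N' * D - N * D'| := by
        have heq : N' / D' - N / D = (N' * D - N * D') / (D' * D) := by
          field_simp
        rw [heq, abs_div, abs_of_pos (mul_pos hD'0 hD0),
          div_le_iff₀ (mul_pos hD'0 hD0)]
        have h12 : (1 : ℝ) ≤ 2 * (D' * D) := by nlinarith
        calc |N' * D - N * D'| = |N' * D - N * D'| * 1 := (mul_one _).symm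
          _ ≤ |N' * D - N * D'| * (2 * (D' * D)) :=
              mul_le_mul_of_nonneg_left h12 (abs_nonneg _)
          _ = 2 * |N' * D - N * D'| * (D' * D) := by ring
      calc dist (SBCM.Finf G Z δ x i) (SBCM.F G Z γ δ x i)
          = |N' / D' - N / D| := by
            rw [SBCM.Finf, SBCM.F, if_neg hiZ, if_neg hiZ, Real.dist_eq]
        _ ≤ 2 * |N' * D - N * D'| := key
        _ ≤ 2 * (2 * n ^ 2 * Δ * η) := by linarith
        _ = 4 * n ^ 2 * Δ * η := by ring
        _ < C * η := by nlinarith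
        _ < ε := hγε
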